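/- Let Q'(i) denote the probability that a random walk on Z^2 started at the origin, with i.i.d. steps distributed as the difference of two independent uniform elements of S = {(0,0),(1,0),(0,1)}, does not return to the origin during steps 1,...,i, and let P'(i) denote the probability that the walk is at the origin at time i. If P'(i) = Θ(1/i) for 1 ≤ i ≤ s, then Q'(s) = O(1/log s). -/

import Mathlib

open scoped Classical BigOperators
open Finset

noncomputable section

/-- The step set `S = {(0,0), (1,0), (0,1)}` of the paper's planar walk. -/
def S11 : Finset (ℤ × ℤ) := {(0, 0), (1, 0), (0, 1)}

abbrev T11 := ↥S11 × ↥S11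

def step11 (p : T11) : ℤ × ℤ := ((p.1 : ℤ × ℤ) - ((p.2 : ℤ × ℤ)))

def ext11 {s : ℕ} (f : Fin s → T11) (j : ℕ) : ℤ × ℤ :=
  if h : j < s then step11 (f ⟨j, h⟩) else 0

lemma psum_eq {s : ℕ} (f : Fin s → T11) {n : ℕ} (hn : n ≤ s) :
    (∑ j ∈ Finset.univ.filter (fun j : Fin s => (j : ℕ) < n), step11 (f j))
      = ∑ j ∈ Finset.range n, ext11 f j := by
  rw [Finset.sum_filter]
  have h1 : ∀ j : Fin s, (if (j : ℕ) < n then step11 (f j) else 0)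
      = (fun m : ℕ => if m < n then ext11 f m else 0) (j : ℕ) := by
    intro j
    simp only [ext11, Fin.is_lt, dif_pos, Fin.eta]
  rw [Finset.sum_congr rfl (fun j _ => h1 j),
    Fin.sum_univ_eq_sum_range (fun m : ℕ => if m < n then ext11 f m else 0) s]
  rw [← Finset.sum_subset (Finset.range_subset_range.2 hn)
    (fun x _ hx => by rw [if_neg (by simpa using hx)])]
  exact Finset.sum_congr rfl (fun x hx => if_pos (Finset.mem_range.1 hx))

lemma fullsum_eq {i : ℕ} (f : Fin i → T11) :
    (∑ j, step11 (f j)) = ∑ j ∈ Finset.range i, ext11 f j := by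
  have h1 : ∀ j : Fin i, step11 (f j) = ext11 f (j : ℕ) := by
    intro j; simp only [ext11, Fin.is_lt, dif_pos, Fin.eta]
  rw [Finset.sum_congr rfl (fun j _ => h1 j),
    Fin.sum_univ_eq_sum_range (ext11 f) i]

lemma sum_range_split (φ : ℕ → ℤ × ℤ) {i n : ℕ} (h : i ≤ n) :
    ∑ j ∈ Finset.range n, φ j
      = (∑ j ∈ Finset.range i, φ j) + ∑ j ∈ Finset.range (n - i), φ (i + j) := by
  rw [Finset.range_eq_Ico, ← Finset.sum_Ico_consecutive _ (Nat.zero_le i) h]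
  congr 1
  · rw [Finset.sum_Ico_eq_sum_range]; simp
  rw [Finset.sum_Ico_eq_sum_range, Finset.range_eq_Ico]

section split
variable {s i : ℕ} (hi : i ≤ s)

def cat11 (g : Fin i → T11) (h : Fin (s - i) → T11) : Fin s → T11 :=
  fun j => if hj : (j : ℕ) < i then g ⟨j, hj⟩ else h ⟨(j : ℕ) - i, by omega⟩

def front11 (f : Fin s → T11) : Fin i → T11 := fun j => f ⟨(j : ℕ), by omega⟩

def back11 (f : Fin s → T11) : Fin (s - i) → T11 := fun j => f ⟨i + (j : ℕ), by omega⟩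

lemma ext_cat (g : Fin i → T11) (h : Fin (s - i) → T11) (j : ℕ) :
    ext11 (cat11 hi g h) j = if j < i then ext11 g j else ext11 h (j - i) := by
  unfold ext11 cat11
  by_cases h1 : j < s
  · by_cases h2 : j < i
    · simp [h1, h2]
    · have h3 : j - i < s - i := by omega
      simp [h1, h2, h3]
  · have h2 : ¬ j < i := by omega
    have h3 : ¬ j - i < s - i := by omega
    simp [h1, h2, h3]

lemma ext_front (f : Fin s → T11) {j : ℕ} (hj : j < i) :
    ext11 (front11 hi f) j = ext11 f j := by
  unfold ext11 front11
  have h1 : j < s := by omega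
  simp [hj, h1]

lemma ext_back (f : Fin s → T11) (j : ℕ) :
    ext11 (back11 hi f) j = ext11 f (i + j) := by
  unfold ext11 back11
  by_cases h1 : j < s - i
  · simp [h1, show i + j < s by omega]
  · simp [h1, show ¬ i + j < s by omega]

lemma sum_cat_le (g : Fin i → T11) (h : Fin (s - i) → T11) {n : ℕ} (hn : n ≤ i) :
    ∑ j ∈ Finset.range n, ext11 (cat11 hi g h) j = ∑ j ∈ Finset.range n, ext11 g j :=
  Finset.sum_congr rfl fun j hj => by
    rw [ext_cat]; exact if_pos (by have := Finset.mem_range.1 hj; omega)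

lemma sum_cat_ge (g : Fin i → T11) (h : Fin (s - i) → T11) {n : ℕ} (hn : i ≤ n) :
    ∑ j ∈ Finset.range n, ext11 (cat11 hi g h) j
      = (∑ j ∈ Finset.range i, ext11 g j) + ∑ j ∈ Finset.range (n - i), ext11 h j := by
  rw [sum_range_split _ hn, sum_cat_le hi g h le_rfl]
  congr 1
  refine Finset.sum_congr rfl fun j _ => ?_
  rw [ext_cat, if_neg (by omega)]
  congr 1; omega

lemma sum_back (f : Fin s → T11) (n : ℕ) :
    ∑ j ∈ Finset.range n, ext11 (back11 hi f) j
      = (∑ j ∈ Finset.range (i + n), ext11 f j) - ∑ j ∈ Finset.range i, ext11 f j := by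
  rw [eq_sub_iff_add_eq, sum_range_split (ext11 f) (show i ≤ i + n by omega), add_comm]
  congr 1
  simp only [Nat.add_sub_cancel_left]
  exact Finset.sum_congr rfl fun j _ => ext_back hi f j

lemma cat_front_back (f : Fin s → T11) : cat11 hi (front11 hi f) (back11 hi f) = f := by
  funext j
  unfold cat11 front11 back11
  by_cases hj : (j : ℕ) < i
  · simp only [hj, dif_pos]
  · simp only [hj, dif_neg, not_false_iff]
    congr 1
    apply Fin.ext
    simp; omega

lemma front_cat (g : Fin i → T11) (h : Fin (s - i) → T11) : front11 hi (cat11 hi g h) = g := by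
  funext j
  unfold cat11 front11
  simp only [Fin.is_lt, dif_pos, Fin.eta]

lemma back_cat (g : Fin i → T11) (h : Fin (s - i) → T11) : back11 hi (cat11 hi g h) = h := by
  funext j
  unfold cat11 back11
  have : ¬ (i + (j : ℕ) < i) := by omega
  simp only [this, dif_neg, not_false_iff, Nat.add_sub_cancel_left, Fin.eta]

end split

/-- `P'(i)`: the probability that the walk on `ℤ²` with i.i.d. steps distributed as the
difference of two independent uniform elements of `S11` is at the origin at time `i`. -/
def P11 (i : ℕ) : ℝ :=
  ((Finset.univ.filter (fun f : Fin i → ↥S11 × ↥S11 =>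
      (∑ j, (((f j).1 : ℤ × ℤ) - ((f j).2 : ℤ × ℤ))) = 0)).card : ℝ) / 9 ^ i

/-- `Q'(s)`: the probability that the same walk does not return to the origin during
steps `1, ..., s`. -/
def Q11 (s : ℕ) : ℝ :=
  ((Finset.univ.filter (fun f : Fin s → ↥S11 × ↥S11 =>
      ∀ n : ℕ, 1 ≤ n → n ≤ s →
        (∑ j ∈ Finset.univ.filter (fun j : Fin s => (j : ℕ) < n),
          (((f j).1 : ℤ × ℤ) - ((f j).2 : ℤ × ℤ))) ≠ 0)).card : ℝ) / 9 ^ s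

def NP (i : ℕ) : ℕ :=
  (Finset.univ.filter (fun f : Fin i → T11 => ∑ j ∈ Finset.range i, ext11 f j = 0)).card

def NQ (m : ℕ) : ℕ :=
  (Finset.univ.filter (fun f : Fin m → T11 =>
    ∀ n : ℕ, 1 ≤ n → n ≤ m → ∑ j ∈ Finset.range n, ext11 f j ≠ 0)).card

lemma card_T11 : Fintype.card T11 = 9 := by
  simp [Fintype.card_prod, Fintype.card_coe]
  decide

lemma card_fun (m : ℕ) : Fintype.card (Fin m → T11) = 9 ^ m := by
  rw [Fintype.card_fun, card_T11, Fintype.card_fin]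

lemma P11_eq (i : ℕ) : P11 i = NP i / 9 ^ i := by
  unfold P11 NP
  congr 2
  apply congrArg
  apply Finset.filter_congr
  intro f _
  rw [show (∑ j, (((f j).1 : ℤ × ℤ) - ((f j).2 : ℤ × ℤ))) = ∑ j, step11 (f j) from rfl,
    fullsum_eq]

lemma Q11_eq (s : ℕ) : Q11 s = NQ s / 9 ^ s := by
  unfold Q11 NQ
  congr 2
  apply congrArg
  apply Finset.filter_congr
  intro f _
  constructor
  · intro hf n h1 h2
    rw [← psum_eq f h2]; exact hf n h1 h2
  · intro hf n h1 h2
    show (∑ j ∈ Finset.univ.filter (fun j : Fin s => (j : ℕ) < n), step11 (f j)) ≠ 0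
    rw [psum_eq f h2]; exact hf n h1 h2

lemma P11_nonneg (i : ℕ) : 0 ≤ P11 i := by
  unfold P11; positivity

lemma Q11_nonneg (s : ℕ) : 0 ≤ Q11 s := by
  unfold Q11; positivity

lemma cardA {s i : ℕ} (hi : i ≤ s) :
    (Finset.univ.filter (fun f : Fin s → T11 =>
      (∑ j ∈ Finset.range i, ext11 f j) = 0 ∧
      ∀ n : ℕ, i < n → n ≤ s → ∑ j ∈ Finset.range n, ext11 f j ≠ 0)).card
    = NP i * NQ (s - i) := by
  unfold NP NQ
  rw [← Finset.card_product]
  apply Finset.card_nbij' (i := fun f => (front11 hi f, back11 hi f))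
    (j := fun p => cat11 hi p.1 p.2)
  · intro f hf
    rw [Finset.mem_coe, Finset.mem_filter] at hf
    obtain ⟨-, h0, hav⟩ := hf
    rw [Finset.mem_coe, Finset.mem_product, Finset.mem_filter, Finset.mem_filter]
    refine ⟨⟨Finset.mem_univ _, ?_⟩, Finset.mem_univ _, ?_⟩
    · rw [Finset.sum_congr rfl (fun j hj => ext_front hi f (Finset.mem_range.1 hj))]
      exact h0
    · intro n h1 h2
      rw [sum_back hi f n, h0, sub_zero]
      exact hav (i + n) (by omega) (by omega)
  · intro p hp
    rw [Finset.mem_coe, Finset.mem_product, Finset.mem_filter, Finset.mem_filter] at hp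
    obtain ⟨⟨-, h0⟩, -, hav⟩ := hp
    rw [Finset.mem_coe, Finset.mem_filter]
    refine ⟨Finset.mem_univ _, ?_, ?_⟩
    · rw [sum_cat_le hi p.1 p.2 le_rfl]; exact h0
    · intro n h1 h2
      rw [sum_cat_ge hi p.1 p.2 (le_of_lt h1), h0, zero_add]
      exact hav (n - i) (by omega) (by omega)
  · intro f _; exact cat_front_back hi f
  · intro p _; exact Prod.ext (front_cat hi p.1 p.2) (back_cat hi p.1 p.2)

lemma conv_le (s : ℕ) :
    ∑ i ∈ Finset.range (s + 1), NP i * NQ (s - i) ≤ 9 ^ s := by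
  classical
  set A : ℕ → Finset (Fin s → T11) := fun i =>
    Finset.univ.filter (fun f : Fin s → T11 =>
      (∑ j ∈ Finset.range i, ext11 f j) = 0 ∧
      ∀ n : ℕ, i < n → n ≤ s → ∑ j ∈ Finset.range n, ext11 f j ≠ 0) with hA
  have hcard : ∀ i ∈ Finset.range (s + 1), (A i).card = NP i * NQ (s - i) := by
    intro i hi
    have := Finset.mem_range.1 hi
    exact cardA (by omega)
  rw [← Finset.sum_congr rfl hcard]
  have hdisj : (Finset.range (s + 1) : Set ℕ).Pairwise
      (Function.onFun Disjoint A) := by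
    intro a ha b hb hab
    wlog h : a < b generalizing a b
    · exact (this hb ha (Ne.symm hab) (by omega)).symm
    rw [Function.onFun, Finset.disjoint_left]
    intro f hfa hfb
    rw [hA, Finset.mem_filter] at hfa hfb
    have hb' : b < s + 1 := by simpa using hb
    exact hfa.2.2 b h (by omega) hfb.2.1
  calc ∑ i ∈ Finset.range (s + 1), (A i).card
      = ((Finset.range (s + 1)).biUnion A).card :=
        (Finset.card_biUnion (fun a ha b hb hab => hdisj (by simpa using ha) (by simpa using hb) hab)).symm
    _ ≤ (Finset.univ : Finset (Fin s → T11)).card := Finset.card_le_card (Finset.subset_univ _)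
    _ = 9 ^ s := by rw [Finset.card_univ, card_fun]

lemma NQ_mono {m s : ℕ} (hm : m ≤ s) : NQ s ≤ NQ m * 9 ^ (s - m) := by
  unfold NQ
  have hcard : ((Finset.univ.filter (fun f : Fin m → T11 =>
      ∀ n : ℕ, 1 ≤ n → n ≤ m → ∑ j ∈ Finset.range n, ext11 f j ≠ 0)) ×ˢ
      (Finset.univ : Finset (Fin (s - m) → T11))).card
      = (Finset.univ.filter (fun f : Fin m → T11 =>
      ∀ n : ℕ, 1 ≤ n → n ≤ m → ∑ j ∈ Finset.range n, ext11 f j ≠ 0)).card * 9 ^ (s - m) := by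
    rw [Finset.card_product, Finset.card_univ, card_fun]
  rw [← hcard]
  apply Finset.card_le_card_of_injOn (fun f => (front11 hm f, back11 hm f))
  · intro f hf
    rw [Finset.mem_coe, Finset.mem_filter] at hf
    rw [Finset.mem_coe, Finset.mem_product, Finset.mem_filter]
    refine ⟨⟨Finset.mem_univ _, ?_⟩, Finset.mem_univ _⟩
    intro n h1 h2
    show (∑ j ∈ Finset.range n, ext11 (front11 hm f) j) ≠ 0
    rw [Finset.sum_congr rfl
      (fun j hj => ext_front hm f (lt_of_lt_of_le (Finset.mem_range.1 hj) h2))]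
    exact hf.2 n h1 (by omega)
  · intro f _ g _ hfg
    have h1 := congrArg Prod.fst hfg
    have h2 := congrArg Prod.snd hfg
    simp only at h1 h2
    rw [← cat_front_back hm f, ← cat_front_back hm g, h1, h2]

lemma Q11_mono {m s : ℕ} (hm : m ≤ s) : Q11 s ≤ Q11 m := by
  rw [Q11_eq, Q11_eq]
  rw [div_le_div_iff₀ (by positivity) (by positivity)]
  calc (NQ s : ℝ) * 9 ^ m ≤ (NQ m * 9 ^ (s - m)) * 9 ^ m := by
        have := NQ_mono hm
        have h9 : (0:ℝ) ≤ 9 ^ m := by positivity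
        exact mul_le_mul_of_nonneg_right (by exact_mod_cast this) h9
    _ = NQ m * 9 ^ s := by
        rw [mul_assoc, ← pow_add]
        congr 2
        omega

lemma conv_real (s : ℕ) :
    ∑ i ∈ Finset.range (s + 1), P11 i * Q11 (s - i) ≤ 1 := by
  have h9 : (0:ℝ) < 9 ^ s := by positivity
  have key : ∀ i ∈ Finset.range (s + 1),
      P11 i * Q11 (s - i) = (NP i * NQ (s - i) : ℕ) / 9 ^ s := by
    intro i hi
    have hi' := Finset.mem_range.1 hi
    rw [P11_eq, Q11_eq, div_mul_div_comm, ← pow_add]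
    push_cast
    congr 2
    omega
  rw [Finset.sum_congr rfl key, ← Finset.sum_div]
  rw [div_le_one h9]
  have := conv_le s
  calc (∑ i ∈ Finset.range (s + 1), ((NP i * NQ (s - i) : ℕ) : ℝ))
      = ((∑ i ∈ Finset.range (s + 1), NP i * NQ (s - i) : ℕ) : ℝ) := by push_cast; rfl
    _ ≤ ((9 ^ s : ℕ) : ℝ) := by exact_mod_cast this
    _ = 9 ^ s := by push_cast; rfl

lemma harmonic_ge_log (s : ℕ) :
    Real.log (s + 1) ≤ ∑ i ∈ Finset.range s, (1 : ℝ) / (i + 1) := by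
  induction s with
  | zero => simp
  | succ n ih =>
    rw [Finset.sum_range_succ]
    have h1 : (0:ℝ) < n + 1 := by positivity
    have h2 : (0:ℝ) < n + 2 := by positivity
    have key : Real.log (n + 2) - Real.log (n + 1) ≤ 1 / (n + 1) := by
      rw [← Real.log_div (by positivity) (by positivity)]
      have := Real.log_le_sub_one_of_pos (show (0:ℝ) < (n + 2) / (n + 1) by positivity)
      calc Real.log ((n + 2) / (n + 1)) ≤ (n + 2) / (n + 1) - 1 := this
        _ = 1 / (n + 1) := by field_simp; norm_num
    push_cast
    push_cast at ih key
    rw [show (n:ℝ) + 1 + 1 = (n:ℝ) + 2 from by ring]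
    linarith

/-- If `P'(i) = Θ(1/i)` for `1 ≤ i ≤ s`, then `Q'(s) = O(1/log s)`. -/
theorem stmt11 (c₁ c₂ : ℝ) (hc₁ : 0 < c₁) (hc₂ : 0 < c₂) :
    ∃ C : ℝ, 0 < C ∧ ∀ s : ℕ, 2 ≤ s →
      (∀ i : ℕ, 1 ≤ i → i ≤ s → c₁ / i ≤ P11 i ∧ P11 i ≤ c₂ / i) →
      Q11 s ≤ C / Real.log s := by
  refine ⟨1 / c₁, by positivity, ?_⟩
  intro s hs hP
  have hs1 : (1:ℝ) < s := by exact_mod_cast (by omega : 1 < s)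
  have hlog : 0 < Real.log s := Real.log_pos hs1
  -- step 1: termwise lower bound on Ico 1 (s+1)
  have h2 : ∀ i ∈ Finset.Ico 1 (s + 1), (c₁ / i) * Q11 s ≤ P11 i * Q11 (s - i) := by
    intro i hi
    rw [Finset.mem_Ico] at hi
    obtain ⟨hi1, hi2⟩ := hi
    have hiS : i ≤ s := by omega
    have hPi := (hP i hi1 hiS).1
    have hQ : Q11 s ≤ Q11 (s - i) := Q11_mono (by omega)
    have hci : (0:ℝ) ≤ c₁ / i := by positivity
    exact mul_le_mul hPi hQ (Q11_nonneg s) (le_trans hci hPi)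
  have h1 : ∑ i ∈ Finset.Ico 1 (s + 1), P11 i * Q11 (s - i)
      ≤ ∑ i ∈ Finset.range (s + 1), P11 i * Q11 (s - i) := by
    apply Finset.sum_le_sum_of_subset_of_nonneg
    · rw [Finset.range_eq_Ico]
      exact Finset.Ico_subset_Ico (by omega) le_rfl
    · intro i _ _
      exact mul_nonneg (P11_nonneg i) (Q11_nonneg (s - i))
  have h3 : ∑ i ∈ Finset.Ico 1 (s + 1), (c₁ / i) * Q11 s
      = c₁ * Q11 s * ∑ k ∈ Finset.range s, (1:ℝ) / (k + 1) := by
    rw [Finset.mul_sum, Finset.sum_Ico_eq_sum_range]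
    simp only [Nat.add_sub_cancel]
    refine Finset.sum_congr rfl fun k _ => ?_
    push_cast
    ring
  have h4 : Real.log s ≤ ∑ k ∈ Finset.range s, (1:ℝ) / (k + 1) := by
    refine le_trans ?_ (harmonic_ge_log s)
    apply Real.log_le_log (by positivity)
    push_cast; linarith
  have main : c₁ * Q11 s * Real.log s ≤ 1 := by
    have hQs := Q11_nonneg s
    calc c₁ * Q11 s * Real.log s
        ≤ c₁ * Q11 s * ∑ k ∈ Finset.range s, (1:ℝ) / (k + 1) := by
          apply mul_le_mul_of_nonneg_left h4 (by positivity)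
      _ = ∑ i ∈ Finset.Ico 1 (s + 1), (c₁ / i) * Q11 s := h3.symm
      _ ≤ ∑ i ∈ Finset.Ico 1 (s + 1), P11 i * Q11 (s - i) := Finset.sum_le_sum h2
      _ ≤ ∑ i ∈ Finset.range (s + 1), P11 i * Q11 (s - i) := h1
      _ ≤ 1 := conv_real s
  rw [div_div, le_div_iff₀ (by positivity : (0:ℝ) < c₁ * Real.log s)]
  calc Q11 s * (c₁ * Real.log s) = c₁ * Q11 s * Real.log s := by ring
    _ ≤ 1 := main

end
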